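/- Let M₁ ∈ F^{I₁×I₁}, M₂ ∈ F^{I₂×I₂}, and A₁,…,A_K ∈ F^{I₁×I₂} satisfy M₁ᵀ Aᵢ = Aᵢ M₂ for all i, where [A₁ᵀ;…;A_Kᵀ] has full column rank. If M₂ is diagonalizable (over F), then the minimal polynomial of M₁ divides the minimal polynomial of M₂; in particular if additionally [A₁;…;A_K] has full column rank then M₁ is also diagonalizable. -/

import Mathlib

open Matrix Polynomial

theorem aux_transpose_aeval {n : ℕ} (M : Matrix (Fin n) (Fin n) ℂ) (q : ℂ[X]) :
    (aeval M q)ᵀ = aeval Mᵀ q := by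
  induction q using Polynomial.induction_on' with
  | add p q hp hq => rw [map_add, map_add, transpose_add, hp, hq]
  | monomial k a =>
      rw [aeval_monomial, aeval_monomial, transpose_mul, transpose_pow]
      have : ((algebraMap ℂ (Matrix (Fin n) (Fin n) ℂ)) a)ᵀ
          = (algebraMap ℂ (Matrix (Fin n) (Fin n) ℂ)) a := by
        simp [Matrix.algebraMap_eq_diagonal]
      rw [this, ← Algebra.commutes]

theorem aux_intertwine {n m : ℕ} (M₁ : Matrix (Fin n) (Fin n) ℂ) (M₂ : Matrix (Fin m) (Fin m) ℂ)
    (B : Matrix (Fin n) (Fin m) ℂ) (h : M₁ * B = B * M₂) (q : ℂ[X]) :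
    aeval M₁ q * B = B * aeval M₂ q := by
  induction q using Polynomial.induction_on' with
  | add p q hp hq => rw [map_add, map_add, Matrix.add_mul, Matrix.mul_add, hp, hq]
  | monomial k a =>
      have hpow : ∀ k : ℕ, M₁ ^ k * B = B * M₂ ^ k := by
        intro k
        induction k with
        | zero => simp
        | succ k ih =>
            rw [pow_succ, pow_succ, Matrix.mul_assoc, h, ← Matrix.mul_assoc, ih,
              Matrix.mul_assoc]
      rw [aeval_monomial, aeval_monomial, Matrix.mul_assoc, hpow, ← Matrix.mul_assoc,
        ← Matrix.mul_assoc]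
      congr 1
      rw [Algebra.algebraMap_eq_smul_one, Algebra.algebraMap_eq_smul_one,
        Matrix.smul_mul, Matrix.mul_smul, Matrix.one_mul, Matrix.mul_one]

/-- A diagonalizable matrix is annihilated by a squarefree polynomial. -/
theorem aux_sf {m : ℕ} (M₂ : Matrix (Fin m) (Fin m) ℂ)
    (P : Matrix (Fin m) (Fin m) ℂ) (d : Fin m → ℂ)
    (hP : IsUnit P.det) (hM : M₂ = P * Matrix.diagonal d * P⁻¹) :
    ∃ p : ℂ[X], Squarefree p ∧ aeval M₂ p = 0 := by
  classical
  set s : Finset ℂ := Finset.univ.image d with hs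
  refine ⟨∏ c ∈ s, (X - C c), ?_, ?_⟩
  · apply Polynomial.Separable.squarefree
    apply Polynomial.separable_prod_X_sub_C_iff'.mpr
    intro i hi j hj hij
    exact hij
  · have hDveval : aeval (Matrix.diagonal d) (∏ c ∈ s, (X - C c)) = 0 := by
      have h1 : Matrix.diagonal d = Matrix.diagonalAlgHom ℂ d := rfl
      rw [h1, aeval_algHom_apply]
      have h2 : aeval d (∏ c ∈ s, (X - C c)) = 0 := by
        funext i
        have h3 : (aeval d (∏ c ∈ s, (X - C c))) i
            = aeval (d i) (∏ c ∈ s, (X - C c)) :=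
          (aeval_algHom_apply (Pi.evalAlgHom ℂ (fun _ : Fin m => ℂ) i) d
            (∏ c ∈ s, (X - C c))).symm
        rw [Pi.zero_apply, h3, map_prod]
        refine Finset.prod_eq_zero (Finset.mem_image_of_mem d (Finset.mem_univ i)) ?_
        simp
      rw [h2, map_zero]
    have hcomm : M₂ * P = P * Matrix.diagonal d := by
      rw [hM, Matrix.mul_assoc, Matrix.nonsing_inv_mul P hP, Matrix.mul_one]
    have := aux_intertwine M₂ (Matrix.diagonal d) P hcomm (∏ c ∈ s, (X - C c))
    rw [hDveval, Matrix.mul_zero] at this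
    calc aeval M₂ (∏ c ∈ s, (X - C c))
        = aeval M₂ (∏ c ∈ s, (X - C c)) * (P * P⁻¹) := by
          rw [Matrix.mul_nonsing_inv P hP, Matrix.mul_one]
      _ = 0 := by rw [← Matrix.mul_assoc, this, Matrix.zero_mul]

/-- A matrix with an eigenbasis is diagonalizable in the explicit sense. -/
theorem aux_diag {n : ℕ} (M : Matrix (Fin n) (Fin n) ℂ)
    (b : Module.Basis (Fin n) ℂ (Fin n → ℂ)) (d : Fin n → ℂ)
    (hb : ∀ i, M.mulVec (b i) = d i • b i) :
    ∃ (P : Matrix (Fin n) (Fin n) ℂ) (d' : Fin n → ℂ),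
      IsUnit P.det ∧ M = P * Matrix.diagonal d' * P⁻¹ := by
  classical
  set e : Module.Basis (Fin n) ℂ (Fin n → ℂ) := Pi.basisFun ℂ (Fin n)
  set f : (Fin n → ℂ) →ₗ[ℂ] (Fin n → ℂ) := Matrix.toLin e e M with hf
  have hfe : LinearMap.toMatrix e e f = M := LinearMap.toMatrix_toLin e e M
  have hdiagb : LinearMap.toMatrix b b f = Matrix.diagonal d := by
    ext i j
    rw [LinearMap.toMatrix_apply]
    have hfb : f (b j) = d j • b j := by
      rw [hf, Matrix.toLin_eq_toLin', Matrix.toLin'_apply, hb]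
    rw [hfb, _root_.map_smul]
    by_cases hij : i = j
    · subst hij; simp [Matrix.diagonal]
    · simp [Matrix.diagonal, hij, Module.Basis.repr_self, Finsupp.single_apply, Ne.symm hij]
  have key := basis_toMatrix_mul_linearMap_toMatrix_mul_basis_toMatrix e b e b f
  set P : Matrix (Fin n) (Fin n) ℂ := e.toMatrix b with hPdef
  have hinv : Invertible P := e.invertibleToMatrix b
  have hdet : IsUnit P.det := P.isUnit_det_of_invertible
  have hflip : P * b.toMatrix e = 1 := Module.Basis.toMatrix_mul_toMatrix_flip e b
  have hPinv : P⁻¹ = b.toMatrix e := Matrix.inv_eq_right_inv hflip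
  refine ⟨P, d, hdet, ?_⟩
  rw [← hfe, ← key, hdiagb, hPinv]

/-- A matrix annihilated by a squarefree polynomial has an eigenbasis. -/
theorem aux_eigenbasis {n : ℕ} (M : Matrix (Fin n) (Fin n) ℂ) (p : ℂ[X])
    (hp : Squarefree p) (h0 : aeval M p = 0) :
    ∃ (b : Module.Basis (Fin n) ℂ (Fin n → ℂ)) (d : Fin n → ℂ),
      ∀ i, M.mulVec (b i) = d i • b i := by
  classical
  set f : Module.End ℂ (Fin n → ℂ) := Matrix.toLin' M with hfdef
  have hfap : ∀ v, f v = M.mulVec v := fun v => Matrix.toLin'_apply M v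
  have hf0 : aeval f p = 0 := by
    have : f = Matrix.toLinAlgEquiv' M := rfl
    rw [this, ← AlgEquiv.coe_algHom, aeval_algHom_apply, h0, map_zero]
  have hss : f.IsSemisimple := Module.End.isSemisimple_of_squarefree_aeval_eq_zero hp hf0
  have htop : ⨆ μ : ℂ, f.eigenspace μ = ⊤ := by
    have h1 := Module.End.iSup_maxGenEigenspace_eq_top f
    have h2 : ∀ μ : ℂ, f.maxGenEigenspace μ = f.eigenspace μ := fun μ =>
      hss.isFinitelySemisimple.maxGenEigenspace_eq_eigenspace μ
    simpa only [h2] using h1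
  have hInternal : DirectSum.IsInternal (fun μ : ℂ => f.eigenspace μ) :=
    (DirectSum.isInternal_submodule_iff_iSupIndep_and_iSup_eq_top _).mpr
      ⟨f.eigenspaces_iSupIndep, htop⟩
  let v : ∀ μ : ℂ, Module.Basis (Fin (Module.finrank ℂ (f.eigenspace μ))) ℂ (f.eigenspace μ) :=
    fun μ => Module.finBasis ℂ _
  let b0 := hInternal.collectedBasis v
  haveI : Fintype (Σ μ : ℂ, Fin (Module.finrank ℂ (f.eigenspace μ))) :=
    IsNoetherian.fintypeBasisIndex b0
  have hcard : Fintype.card (Σ μ : ℂ, Fin (Module.finrank ℂ (f.eigenspace μ))) = n := by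
    have := Module.finrank_eq_card_basis b0
    simpa [Module.finrank_fin_fun] using this.symm
  let eqv := Fintype.equivFinOfCardEq hcard
  refine ⟨b0.reindex eqv, fun i => (eqv.symm i).1, fun i => ?_⟩
  have hmem : b0 (eqv.symm i) ∈ f.eigenspace (eqv.symm i).1 :=
    hInternal.collectedBasis_mem v (eqv.symm i)
  rw [Module.End.mem_eigenspace_iff] at hmem
  rw [Module.Basis.reindex_apply, ← hfap, hmem]

/-- If `M₁ᵀ Aᵢ = Aᵢ M₂` for all `i`, the stacked matrix `[A₁ᵀ;…;A_Kᵀ]` has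
full column rank, and `M₂` is diagonalizable, then the minimal polynomial of
`M₁` divides that of `M₂`; if moreover `[A₁;…;A_K]` has full column rank,
then `M₁` is diagonalizable as well. -/
theorem stmt_12 {I₁ I₂ K : ℕ}
    (M₁ : Matrix (Fin I₁) (Fin I₁) ℂ) (M₂ : Matrix (Fin I₂) (Fin I₂) ℂ)
    (A : Fin K → Matrix (Fin I₁) (Fin I₂) ℂ)
    (hfcrT : ∀ y : Fin I₁ → ℂ, (∀ i, (A i)ᵀ.mulVec y = 0) → y = 0)
    (h : ∀ i, M₁ᵀ * A i = A i * M₂)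
    (hdiag₂ : ∃ (P : Matrix (Fin I₂) (Fin I₂) ℂ) (d : Fin I₂ → ℂ),
      IsUnit P.det ∧ M₂ = P * Matrix.diagonal d * P⁻¹) :
    minpoly ℂ M₁ ∣ minpoly ℂ M₂ ∧
    ((∀ x : Fin I₂ → ℂ, (∀ i, (A i).mulVec x = 0) → x = 0) →
      ∃ (P : Matrix (Fin I₁) (Fin I₁) ℂ) (d : Fin I₁ → ℂ),
        IsUnit P.det ∧ M₁ = P * Matrix.diagonal d * P⁻¹) := by
  classical
  set q : ℂ[X] := minpoly ℂ M₂ with hq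
  set B : Matrix (Fin I₁) (Fin I₁) ℂ := aeval M₁ q with hBdef
  have hB : B = 0 := by
    have hz : ∀ i, (A i)ᵀ * B = 0 := by
      intro i
      have h1 := aux_intertwine M₁ᵀ M₂ (A i) (h i) q
      rw [minpoly.aeval, Matrix.mul_zero, ← aux_transpose_aeval] at h1
      have h2 := congrArg Matrix.transpose h1
      rw [Matrix.transpose_mul, Matrix.transpose_transpose, Matrix.transpose_zero] at h2
      exact h2
    have hv : ∀ v : Fin I₁ → ℂ, B.mulVec v = 0 := by
      intro v
      apply hfcrT
      intro i
      rw [Matrix.mulVec_mulVec, hz i, Matrix.zero_mulVec]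
    have : Matrix.toLin' B = Matrix.toLin' (0 : Matrix (Fin I₁) (Fin I₁) ℂ) := by
      apply LinearMap.ext
      intro v
      rw [Matrix.toLin'_apply, Matrix.toLin'_apply, hv, Matrix.zero_mulVec]
    exact Matrix.toLin'.injective this
  have hdvd : minpoly ℂ M₁ ∣ minpoly ℂ M₂ := minpoly.dvd ℂ M₁ hB
  refine ⟨hdvd, fun _ => ?_⟩
  obtain ⟨P, d, hPu, hM2⟩ := hdiag₂
  obtain ⟨p, hsf, hp0⟩ := aux_sf M₂ P d hPu hM2
  have hqp : q ∣ p := minpoly.dvd ℂ M₂ hp0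
  obtain ⟨r, hr⟩ := hqp
  have hM1p : aeval M₁ p = 0 := by
    rw [hr, _root_.map_mul, ← hBdef, hB, Matrix.zero_mul]
  obtain ⟨b, dd, hb⟩ := aux_eigenbasis M₁ p hsf hM1p
  exact aux_diag M₁ b dd hb
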